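/- For a Gaussian random variable S ~ N(μ, σ²) with σ > 0 and threshold s* ∈ ℝ, the expectation E[max(s* - S, 0)] equals (s* - μ)·Φ((s* - μ)/σ) + σ·φ((s* - μ)/σ), where Φ and φ are the standard normal CDF and PDF. -/

import Mathlib

open MeasureTheory ProbabilityTheory

open Real Set Filter

noncomputable def stdNormalPDF (z : ℝ) : ℝ :=
  (Real.sqrt (2 * Real.pi))⁻¹ * Real.exp (-z ^ 2 / 2)

noncomputable def stdNormalCDF (z : ℝ) : ℝ :=
  ∫ t in Set.Iic z, stdNormalPDF t

lemma integrable_stdNormalPDF : Integrable stdNormalPDF := by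
  have h := (integrable_exp_neg_mul_sq (by norm_num : (0:ℝ) < 1/2)).const_mul
    (Real.sqrt (2 * Real.pi))⁻¹
  convert h using 2 with x
  rw [stdNormalPDF]
  ring_nf

lemma integrable_mul_stdNormalPDF : Integrable (fun x : ℝ => x * stdNormalPDF x) := by
  have h := (integrable_mul_exp_neg_mul_sq (by norm_num : (0:ℝ) < 1/2)).const_mul
    (Real.sqrt (2 * Real.pi))⁻¹
  convert h using 2 with x
  rw [stdNormalPDF]
  ring_nf

lemma hasDerivAt_neg_stdNormalPDF (t : ℝ) :
    HasDerivAt (fun t => -stdNormalPDF t) (t * stdNormalPDF t) t := by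
  have h1 : HasDerivAt (fun t : ℝ => -t ^ 2 / 2) (-t) t := by
    have : HasDerivAt (fun t : ℝ => -t ^ 2 / 2) _ t := ((hasDerivAt_pow 2 t).neg).div_const 2
    convert this using 1
    ring
  have h2 : HasDerivAt (fun x => -((Real.sqrt (2 * Real.pi))⁻¹ * Real.exp (-x ^ 2 / 2))) _ t :=
    (h1.exp.const_mul (Real.sqrt (2 * Real.pi))⁻¹).neg
  convert h2 using 1
  · rfl
  rw [stdNormalPDF]; ring

lemma tendsto_neg_stdNormalPDF :
    Tendsto (fun t : ℝ => -stdNormalPDF t) atBot (nhds 0) := by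
  have hsq : Tendsto (fun t : ℝ => t ^ 2) atBot atTop := by
    have := (tendsto_pow_atTop (n := 2) (α := ℝ) (by norm_num)).comp tendsto_neg_atBot_atTop
    simpa [Function.comp_def] using this
  have h1 : Tendsto (fun t : ℝ => -t ^ 2 / 2) atBot atBot := by
    have := (tendsto_neg_atTop_atBot.comp hsq).atBot_div_const (by norm_num : (0:ℝ) < 2)
    simpa [Function.comp_def] using this
  have h2 : Tendsto (fun t : ℝ => Real.exp (-t ^ 2 / 2)) atBot (nhds 0) :=
    Real.tendsto_exp_atBot.comp h1
  have := (h2.const_mul (Real.sqrt (2 * Real.pi))⁻¹).neg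
  simpa [stdNormalPDF] using this

lemma integral_Iic_mul_stdNormalPDF (a : ℝ) :
    ∫ t in Iic a, t * stdNormalPDF t = -stdNormalPDF a := by
  have := integral_Iic_of_hasDerivAt_of_tendsto' (a := a) (m := 0)
    (f := fun t => -stdNormalPDF t)
    (f' := fun t => t * stdNormalPDF t) (fun x _ => hasDerivAt_neg_stdNormalPDF x)
    integrable_mul_stdNormalPDF.integrableOn tendsto_neg_stdNormalPDF
  simpa using this

lemma map_gaussian (μ σ : ℝ) (hσ : 0 < σ) :
    (gaussianReal 0 1).map (fun x => σ * x + μ) = gaussianReal μ (Real.toNNReal σ ^ 2) := by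
  have h1 : (gaussianReal 0 1).map (σ * ·) = gaussianReal (σ * 0) (⟨σ ^ 2, sq_nonneg σ⟩ * 1) :=
    gaussianReal_map_const_mul σ
  have hcomp : (fun x : ℝ => σ * x + μ) = (· + μ) ∘ (σ * ·) := rfl
  have hv : (⟨σ ^ 2, sq_nonneg σ⟩ : NNReal) * 1 = Real.toNNReal σ ^ 2 := by
    ext; simp only [NNReal.coe_mul, NNReal.coe_one, mul_one]
    exact (congrArg (fun x : ℝ => x ^ 2) (Real.coe_toNNReal _ hσ.le)).symm.trans (NNReal.coe_pow _ _).symm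
  rw [hcomp, ← Measure.map_map (measurable_add_const μ) (measurable_const_mul σ), h1,
    gaussianReal_map_add_const μ, mul_zero, zero_add]
  exact congrArg _ hv

theorem expected_improvement_closed_form (μ σ sstar : ℝ) (hσ : 0 < σ) :
    ∫ s, max (sstar - s) 0 ∂(gaussianReal μ (Real.toNNReal σ ^ 2)) =
      (sstar - μ) * stdNormalCDF ((sstar - μ) / σ) +
        σ * stdNormalPDF ((sstar - μ) / σ) := by
  set a : ℝ := (sstar - μ) / σ with ha
  have hσa : σ * a = sstar - μ := by rw [ha]; field_simp
  have hcont : Continuous stdNormalPDF := by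
    unfold stdNormalPDF; fun_prop
  have hnn : ∀ x, (0:ℝ) ≤ stdNormalPDF x := fun x => by rw [stdNormalPDF]; positivity
  rw [← map_gaussian μ σ hσ,
    integral_map (by fun_prop) (((continuous_sub_left sstar).max continuous_const).aestronglyMeasurable),
    gaussianReal_of_var_ne_zero 0 one_ne_zero]
  have hpdf : gaussianPDF 0 1 = fun x => ((Real.toNNReal (stdNormalPDF x) : NNReal) : ENNReal) := by
    funext x
    simp [gaussianPDF, gaussianPDFReal, stdNormalPDF, ENNReal.ofReal]
  rw [hpdf, integral_withDensity_eq_integral_smul (by fun_prop)]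
  have hintegrand : ∀ x : ℝ, (Real.toNNReal (stdNormalPDF x)) • max (sstar - (σ * x + μ)) 0
      = σ * (stdNormalPDF x * max (a - x) 0) := by
    intro x
    rw [NNReal.smul_def, Real.coe_toNNReal _ (hnn x),
      show sstar - (σ * x + μ) = σ * (a - x) by rw [mul_sub, hσa]; ring,
      show max (σ * (a - x)) 0 = σ * max (a - x) 0 by
        rw [mul_max_of_nonneg _ _ hσ.le, mul_zero], smul_eq_mul]
    ring
  simp_rw [hintegrand]
  rw [integral_const_mul]
  have key : ∫ x, stdNormalPDF x * max (a - x) 0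
      = ∫ x in Iic a, stdNormalPDF x * (a - x) := by
    rw [← setIntegral_eq_integral_of_forall_compl_eq_zero
      (s := Iic a) (fun x hx => by
        have : a - x < 0 := by simpa using not_le.mp (by simpa [Set.mem_Iic] using hx)
        simp [max_eq_right this.le])]
    exact setIntegral_congr_fun measurableSet_Iic fun x hx => by
      rw [max_eq_left (sub_nonneg.mpr (Set.mem_Iic.mp hx))]
  rw [key]
  have hsplit : ∫ x in Iic a, stdNormalPDF x * (a - x)
      = a * stdNormalCDF a - ∫ x in Iic a, x * stdNormalPDF x := by
    simp_rw [show ∀ x : ℝ, stdNormalPDF x * (a - x)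
      = a * stdNormalPDF x - x * stdNormalPDF x from fun x => by ring]
    rw [integral_sub ((integrable_stdNormalPDF.integrableOn).const_mul a)
      integrable_mul_stdNormalPDF.integrableOn, integral_const_mul]
    rfl
  rw [hsplit, integral_Iic_mul_stdNormalPDF, ← hσa]
  ring
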